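/- Consider the planar ODE ẋ = −2xy, ẏ = 2x² (the Poisson formulation of the two-dimensional Toda lattice). For every b < 0, the equilibrium (0, b) is Lyapunov unstable: there exists ε > 0 such that for every δ > 0 there is a differentiable curve γ : [0,∞) → ℝ² satisfying γ'(t) = (−2γ₁(t)γ₂(t), 2γ₁(t)²) for all t ≥ 0, with ‖γ(0) − (0,b)‖ < δ and ‖γ(t) − (0,b)‖ ≥ ε for some t ≥ 0. -/

import Mathlib

/-- Lyapunov instability of the equilibrium `(0, b)`, `b < 0`, of the planar ODE
`ẋ = −2xy, ẏ = 2x²` (Poisson formulation of the two-dimensional Toda lattice). -/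
theorem stmt_8 (b : ℝ) (hb : b < 0) :
    ∃ ε > 0, ∀ δ > 0, ∃ γ : ℝ → ℝ × ℝ,
      (∀ t ∈ Set.Ici (0 : ℝ), HasDerivWithinAt γ
        (-2 * (γ t).1 * (γ t).2, 2 * (γ t).1 ^ 2) (Set.Ici 0) t) ∧
      ‖γ 0 - ((0 : ℝ), b)‖ < δ ∧ ∃ t ≥ (0 : ℝ), ε ≤ ‖γ t - ((0 : ℝ), b)‖ := by
  set r : ℝ := -b with hr
  have hr0 : 0 < r := by simp only [hr]; linarith
  refine ⟨r, hr0, ?_⟩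
  intro δ hδ
  set c : ℝ := Real.log (min 1 (δ / (4 * r))) with hc
  have hmin : 0 < min 1 (δ / (4 * r)) := lt_min one_pos (by positivity)
  have hec : Real.exp c = min 1 (δ / (4 * r)) := Real.exp_log hmin
  have hle1 : Real.exp c ≤ 1 := by rw [hec]; exact min_le_left _ _
  have hleδ : Real.exp c ≤ δ / (4 * r) := by rw [hec]; exact min_le_right _ _
  have hc0 : c ≤ 0 := Real.log_nonpos hmin.le (min_le_left _ _)
  refine ⟨fun t => (r / Real.cosh (2 * r * t + c),
      r * Real.sinh (2 * r * t + c) / Real.cosh (2 * r * t + c)), ?_, ?_, ?_⟩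
  · intro t _
    have hu : HasDerivAt (fun s : ℝ => 2 * r * s + c) (2 * r) t := by
      simpa using ((hasDerivAt_id t).const_mul (2 * r)).add_const c
    set u := 2 * r * t + c with hud
    have hC : Real.cosh u ≠ 0 := (Real.cosh_pos u).ne'
    have h1 : HasDerivAt (fun s : ℝ => Real.cosh (2 * r * s + c))
        (Real.sinh u * (2 * r)) t := by have h := (Real.hasDerivAt_cosh u).comp t hu; exact h
    have h2 : HasDerivAt (fun s : ℝ => Real.sinh (2 * r * s + c))
        (Real.cosh u * (2 * r)) t := by have h := (Real.hasDerivAt_sinh u).comp t hu; exact h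
    have hx : HasDerivAt (fun s : ℝ => r / Real.cosh (2 * r * s + c))
        ((0 * Real.cosh u - r * (Real.sinh u * (2 * r))) / Real.cosh u ^ 2) t :=
      (hasDerivAt_const t r).div h1 hC
    have hy : HasDerivAt (fun s : ℝ => r * Real.sinh (2 * r * s + c) / Real.cosh (2 * r * s + c))
        ((r * (Real.cosh u * (2 * r)) * Real.cosh u - r * Real.sinh u * (Real.sinh u * (2 * r)))
          / Real.cosh u ^ 2) t :=
      (h2.const_mul r).div h1 hC
    have hpair := (hx.prodMk hy).hasDerivWithinAt (s := Set.Ici (0:ℝ))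
    convert hpair using 2
    · exact rfl
    · exact rfl
    · exact rfl
    · field_simp
      ring
    · have hid : Real.cosh u ^ 2 - Real.sinh u ^ 2 = 1 := Real.cosh_sq_sub_sinh_sq u
      field_simp
      nlinarith [Real.cosh_pos u]
  · have hcoshc : (0:ℝ) < Real.cosh c := Real.cosh_pos c
    have heq : r * Real.sinh c / Real.cosh c + r = r * Real.exp c / Real.cosh c := by
      have h := Real.sinh_add_cosh c
      field_simp
      linear_combination h
    have hb1 : r / Real.cosh c ≤ 2 * r * Real.exp c := by
      rw [div_le_iff₀ hcoshc, Real.cosh_eq, Real.exp_neg]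
      have he := Real.exp_pos c
      have hinv : Real.exp c * (Real.exp c)⁻¹ = 1 := mul_inv_cancel₀ he.ne'
      have hexpand : 2 * r * Real.exp c * ((Real.exp c + (Real.exp c)⁻¹) / 2)
          = r * Real.exp c ^ 2 + r * (Real.exp c * (Real.exp c)⁻¹) := by ring
      rw [hexpand, hinv]
      nlinarith [sq_nonneg (Real.exp c)]
    have hb2 : r * Real.sinh c / Real.cosh c + r ≤ r * Real.exp c := by
      rw [heq, mul_div_assoc]
      exact mul_le_mul_of_nonneg_left
        (div_le_self (Real.exp_pos c).le (Real.one_le_cosh c)) hr0.le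
    have hnn2 : 0 ≤ r * Real.sinh c / Real.cosh c + r := by
      rw [heq]; positivity
    have h4 : 2 * r * Real.exp c ≤ δ / 2 := by
      have h := mul_le_mul_of_nonneg_left hleδ (by positivity : (0:ℝ) ≤ 2 * r)
      calc 2 * r * Real.exp c ≤ 2 * r * (δ / (4 * r)) := h
        _ = δ / 2 := by field_simp; ring
    simp only [mul_zero, zero_add, Prod.norm_def, Prod.fst_sub, Prod.snd_sub, sub_zero,
      Real.norm_eq_abs]
    apply max_lt
    · rw [abs_of_nonneg (by positivity)]
      linarith
    · have hbb : r * Real.sinh c / Real.cosh c - b = r * Real.sinh c / Real.cosh c + r := by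
        rw [hr]; ring
      rw [hbb, abs_of_nonneg hnn2]
      nlinarith [Real.exp_pos c]
  · refine ⟨-c / (2 * r), div_nonneg (by linarith) (by positivity), ?_⟩
    have harg : 2 * r * (-c / (2 * r)) + c = 0 := by field_simp; ring
    simp only [harg]
    simp only [Real.cosh_zero, Real.sinh_zero, div_one, mul_zero, zero_div, Prod.norm_def,
      Prod.fst_sub, Prod.snd_sub, sub_zero, Real.norm_eq_abs, zero_sub, abs_neg]
    rw [abs_of_nonneg hr0.le, abs_of_nonpos hb.le]
    exact le_max_left _ _
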